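/- Let $X$ be a finite connected pure $n$-dimensional simplicial complex with $n > 2$, vertex set $V$, in which every $(n-1)$-face is contained in exactly $D$ $n$-faces. Let $W$ be the set of $(n-1)$-faces, $\delta_{min}$ the minimum over $v \in V$ of the number of $(n-1)$-faces containing $v$, $k = \lfloor (n+1)/2 \rfloor$, and $\lambda$ the second largest adjacency eigenvalue of the embedded graph (two $(n-1)$-faces adjacent iff they lie in a common $n$-face). Then $\frac{2 \delta_{min} (nD - \lambda)}{|W| \cdot n \cdot k \cdot (n+1-k)} \leq H(X)$. -/

import Mathlib

open scoped Classical

noncomputable section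

/-- The 1-skeleton of a pure simplicial complex given by its top-dimensional faces. -/
def skeleton {V : Type*} (faces : Finset (Finset V)) : SimpleGraph V where
  Adj u v := u ≠ v ∧ ∃ f ∈ faces, u ∈ f ∧ v ∈ f
  symm := by
    constructor
    rintro u v ⟨h, f, hf, hu, hv⟩
    exact ⟨h.symm, f, hf, hv, hu⟩
  loopless := by
    constructor
    rintro v ⟨h, -⟩
    exact h rfl

/-- The embedded graph: vertices are the `(n-1)`-faces (the members of `W`), two of them
adjacent iff they are distinct and lie in a common top-dimensional face. -/
def embedded {V : Type*} (faces : Finset (Finset V)) (W : Finset (Finset V)) :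
    SimpleGraph {w // w ∈ W} where
  Adj w w' := w ≠ w' ∧ ∃ f ∈ faces, (w : Finset V) ⊆ f ∧ (w' : Finset V) ⊆ f
  symm := by
    constructor
    rintro w w' ⟨h, f, hf, hw, hw'⟩
    exact ⟨h.symm, f, hf, hw', hw⟩
  loopless := by
    constructor
    rintro w ⟨h, -⟩
    exact h rfl

/-- Adjacency matrix of the embedded graph. -/
def embeddedAdjMatrix {V : Type*} (faces : Finset (Finset V)) (W : Finset (Finset V)) :
    Matrix {w // w ∈ W} {w // w ∈ W} ℝ :=
  fun w w' => if (embedded faces W).Adj w w' then 1 else 0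

/-- Along a walk from a vertex in `A` to a vertex not in `A`, some edge crosses the cut. -/
lemma walk_cross {V : Type*} {G : SimpleGraph V} {A : Finset V} {a b : V}
    (p : G.Walk a b) : a ∈ A → b ∉ A → ∃ u u', G.Adj u u' ∧ u ∈ A ∧ u' ∉ A := by
  induction p with
  | nil => intro ha hb; exact absurd ha hb
  | @cons u v w h p ih =>
    intro ha hb
    by_cases hv : v ∈ A
    · exact ih hv hb
    · exact ⟨u, v, h, ha, hv⟩

theorem stmt10 {V : Type*} [Fintype V] [DecidableEq V]
    (n : ℕ) (hn : 2 < n)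
    (faces : Finset (Finset V))
    (hpure : ∀ f ∈ faces, f.card = n + 1)
    (hcover : ∀ v : V, ∃ f ∈ faces, v ∈ f)
    (hconn : (skeleton faces).Connected)
    (W : Finset (Finset V))
    (hW : W = ((Finset.univ : Finset V).powersetCard n).filter
      (fun e => ∃ f ∈ faces, e ⊆ f))
    (k : ℕ) (hk : k = (n + 1) / 2)
    (D : ℕ) (hD : ∀ e ∈ W, (faces.filter (fun f => e ⊆ f)).card = D)
    (δmin : ℕ)
    (hδ : IsLeast {m : ℕ | ∃ v : V, m = (W.filter (fun e => v ∈ e)).card} δmin)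
    (lam : ℝ)
    (hlam : IsGreatest {μ : ℝ |
      Module.End.HasEigenvalue (Matrix.toLin' (embeddedAdjMatrix faces W)) μ ∧
      μ < (n : ℝ) * (D : ℝ)} lam) :
    (2 * (δmin : ℝ) * ((n : ℝ) * (D : ℝ) - lam)) /
      ((W.card : ℝ) * (n : ℝ) * (k : ℝ) * ((n : ℝ) + 1 - (k : ℝ))) ≤
    sInf {x : ℝ | ∃ A : Finset V, 0 < A.card ∧ A.card < Fintype.card V ∧
      x = ((Fintype.card V : ℝ) *
          ((faces.filter (fun f => (∃ v ∈ f, v ∈ A) ∧ (∃ v ∈ f, v ∉ A))).card : ℝ)) /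
        ((A.card : ℝ) * ((Fintype.card V : ℝ) - (A.card : ℝ)))} := by
  classical
  -- basic data
  obtain ⟨⟨v₀, hv₀eq⟩, hδlb⟩ := hδ
  obtain ⟨f₀, hf₀, hv₀f₀⟩ := hcover v₀
  have hf₀card : f₀.card = n + 1 := hpure f₀ hf₀
  have hVcard : n + 1 ≤ Fintype.card V := by
    calc n + 1 = f₀.card := hf₀card.symm
    _ ≤ Finset.univ.card := Finset.card_le_univ f₀
    _ = Fintype.card V := Finset.card_univ
  have hWmem : ∀ w : Finset V, w.card = n → (∃ f ∈ faces, w ⊆ f) → w ∈ W := by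
    intro w hc hf
    rw [hW]
    exact Finset.mem_filter.mpr ⟨Finset.mem_powersetCard.mpr ⟨Finset.subset_univ _, hc⟩, hf⟩
  have hWcard : ∀ w ∈ W, w.card = n := by
    intro w hw
    rw [hW] at hw
    exact (Finset.mem_powersetCard.mp (Finset.mem_filter.mp hw).1).2
  have hw₀W : f₀.erase v₀ ∈ W := by
    refine hWmem _ ?_ ⟨f₀, hf₀, Finset.erase_subset _ _⟩
    rw [Finset.card_erase_of_mem hv₀f₀, hf₀card]
    omega
  have hD1 : 1 ≤ D := by
    rw [← hD _ hw₀W]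
    exact Finset.card_pos.mpr ⟨f₀, Finset.mem_filter.mpr ⟨hf₀, Finset.erase_subset _ _⟩⟩
  have hm1 : 1 ≤ W.card := Finset.card_pos.mpr ⟨_, hw₀W⟩
  -- degree sum: δmin * |V| ≤ n * |W|
  have hsum : ∑ v : V, (W.filter (fun e => v ∈ e)).card = n * W.card := by
    calc ∑ v : V, (W.filter (fun e => v ∈ e)).card
        = ∑ v : V, ∑ w ∈ W, if v ∈ w then 1 else 0 := by
          refine Finset.sum_congr rfl fun v _ => ?_
          rw [Finset.card_filter]
      _ = ∑ w ∈ W, ∑ v : V, if v ∈ w then 1 else 0 := Finset.sum_comm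
      _ = ∑ w ∈ W, w.card := by
          refine Finset.sum_congr rfl fun w _ => ?_
          rw [Finset.sum_boole]
          simp [Finset.filter_univ_mem]
      _ = ∑ _w ∈ W, n := Finset.sum_congr rfl fun w hw => hWcard w hw
      _ = W.card * n := by rw [Finset.sum_const, smul_eq_mul]
      _ = n * W.card := mul_comm _ _
  have hδv : δmin * Fintype.card V ≤ n * W.card := by
    have h1 : Finset.univ.card • δmin ≤ ∑ v : V, (W.filter (fun e => v ∈ e)).card :=
      Finset.card_nsmul_le_sum _ _ _ (fun v _ => hδlb ⟨v, rfl⟩)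
    rw [Finset.card_univ, smul_eq_mul, mul_comm] at h1
    omega
  -- eigenvalue bound : |lam| ≤ n * D
  have hlamabs : |lam| ≤ (n : ℝ) * (D : ℝ) := by
    obtain ⟨x, hx⟩ := hlam.1.1.exists_hasEigenvector
    have hxne : ∃ j : {w // w ∈ W}, x j ≠ 0 := by
      by_contra h
      push_neg at h
      exact hx.2 (funext h)
    obtain ⟨j₀, hj₀⟩ := hxne
    obtain ⟨i, -, hi⟩ := Finset.exists_max_image Finset.univ (fun j => |x j|)
      ⟨j₀, Finset.mem_univ _⟩
    have hxi : 0 < |x i| := lt_of_lt_of_le (abs_pos.mpr hj₀) (hi j₀ (Finset.mem_univ _))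
    have hmv : (embeddedAdjMatrix faces W).mulVec x = lam • x := by
      have h1 := Module.End.mem_eigenspace_iff.mp hx.1
      rwa [Matrix.toLin'_apply] at h1
    -- row sum bound
    have hrow : ∀ ii : {w // w ∈ W},
        ∑ jj, embeddedAdjMatrix faces W ii jj ≤ ((n * D : ℕ) : ℝ) := by
      intro ii
      have hsb : ∑ jj, embeddedAdjMatrix faces W ii jj
          = ((Finset.univ.filter (fun jj => (embedded faces W).Adj ii jj)).card : ℝ) := by
        rw [← Finset.sum_boole]
        rfl
      rw [hsb]
      have hcard : (Finset.univ.filter (fun jj => (embedded faces W).Adj ii jj)).card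
          ≤ n * D := by
        have hmaps : ∀ jj ∈ Finset.univ.filter (fun jj => (embedded faces W).Adj ii jj),
            (jj : Finset V) ∈ (faces.filter (fun f => (ii : Finset V) ⊆ f)).biUnion
              (fun f => (f.powersetCard n).erase (ii : Finset V)) := by
          intro jj hjj
          obtain ⟨hne, f, hf, hif, hjf⟩ := (Finset.mem_filter.mp hjj).2
          refine Finset.mem_biUnion.mpr ⟨f, Finset.mem_filter.mpr ⟨hf, hif⟩, ?_⟩
          refine Finset.mem_erase.mpr ⟨?_, Finset.mem_powersetCard.mpr ⟨hjf, hWcard _ jj.2⟩⟩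
          intro h
          exact hne (Subtype.ext h.symm)
        have h1 : (Finset.univ.filter (fun jj : {w // w ∈ W} =>
              (embedded faces W).Adj ii jj)).card
            ≤ ((faces.filter (fun f => (ii : Finset V) ⊆ f)).biUnion
              (fun f => (f.powersetCard n).erase (ii : Finset V))).card :=
          Finset.card_le_card_of_injOn (fun jj => (jj : Finset V)) hmaps
            (Subtype.coe_injective.injOn)
        refine h1.trans (Finset.card_biUnion_le.trans (le_of_eq ?_))
        have h2 : ∀ f ∈ faces.filter (fun f => (ii : Finset V) ⊆ f),
            ((f.powersetCard n).erase (ii : Finset V)).card = n := by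
          intro f hf
          obtain ⟨hf1, hf2⟩ := Finset.mem_filter.mp hf
          have hmem : (ii : Finset V) ∈ f.powersetCard n :=
            Finset.mem_powersetCard.mpr ⟨hf2, hWcard _ ii.2⟩
          rw [Finset.card_erase_of_mem hmem, Finset.card_powersetCard, hpure f hf1,
            Nat.choose_succ_self_right]
          omega
        calc ∑ f ∈ faces.filter (fun f => (ii : Finset V) ⊆ f),
              ((f.powersetCard n).erase (ii : Finset V)).card
            = ∑ _f ∈ faces.filter (fun f => (ii : Finset V) ⊆ f), n :=
              Finset.sum_congr rfl h2
          _ = (faces.filter (fun f => (ii : Finset V) ⊆ f)).card * n := by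
              rw [Finset.sum_const, smul_eq_mul]
          _ = D * n := by rw [hD _ ii.2]
          _ = n * D := mul_comm _ _
      exact_mod_cast Nat.cast_le.mpr hcard
    have hxieq : (embeddedAdjMatrix faces W).mulVec x i = lam * x i := by
      rw [hmv]; simp
    have hchain : |lam| * |x i| ≤ ((n * D : ℕ) : ℝ) * |x i| := by
      calc |lam| * |x i| = |lam * x i| := (abs_mul _ _).symm
        _ = |(embeddedAdjMatrix faces W).mulVec x i| := by rw [hxieq]
        _ = |∑ jj, embeddedAdjMatrix faces W i jj * x jj| := by
            simp [Matrix.mulVec, dotProduct]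
        _ ≤ ∑ jj, |embeddedAdjMatrix faces W i jj * x jj| :=
            Finset.abs_sum_le_sum_abs _ _
        _ ≤ ∑ jj, embeddedAdjMatrix faces W i jj * |x i| := by
            refine Finset.sum_le_sum fun jj _ => ?_
            rw [abs_mul]
            have hnn : 0 ≤ embeddedAdjMatrix faces W i jj := by
              unfold embeddedAdjMatrix
              split <;> norm_num
            rw [abs_of_nonneg hnn]
            exact mul_le_mul_of_nonneg_left (hi jj (Finset.mem_univ _)) hnn
        _ = (∑ jj, embeddedAdjMatrix faces W i jj) * |x i| := (Finset.sum_mul _ _ _).symm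
        _ ≤ ((n * D : ℕ) : ℝ) * |x i| :=
            mul_le_mul_of_nonneg_right (hrow i) (abs_nonneg _)
    have := le_of_mul_le_mul_right hchain hxi
    calc |lam| ≤ ((n * D : ℕ) : ℝ) := this
      _ = (n : ℝ) * (D : ℝ) := by push_cast; ring
  have hlam2 : (n : ℝ) * (D : ℝ) - lam ≤ 2 * ((n : ℝ) * (D : ℝ)) := by
    have := neg_abs_le lam
    linarith
  -- k facts
  have hk2 : 2 ≤ k := by omega
  have hkn1 : k ≤ n + 1 := by omega
  set k' : ℕ := n + 1 - k with hk'def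
  have hkk' : k + k' = n + 1 := by omega
  have hk'2 : 2 ≤ k' := by omega
  have hnkk' : n ≤ k * k' := by
    have h1 : 2 * k' ≤ k * k' := Nat.mul_le_mul_right k' hk2
    omega
  have hkr : ((k' : ℕ) : ℝ) = (n : ℝ) + 1 - (k : ℝ) := by
    have h : (k : ℝ) + (k' : ℝ) = (n : ℝ) + 1 := by exact_mod_cast hkk'
    linarith
  -- main
  apply le_csInf
  · refine ⟨_, ⟨{v₀}, ?_, ?_, rfl⟩⟩
    · simp
    · rw [Finset.card_singleton]; omega
  rintro x ⟨A, hA0, hAV, rfl⟩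
  -- crossing edge
  obtain ⟨a₀, ha₀⟩ := Finset.card_pos.mp hA0
  have hAc : ∃ b, b ∉ A := by
    by_contra h
    push_neg at h
    have h1 : Finset.univ ⊆ A := fun z _ => h z
    have h2 := Finset.card_le_card h1
    rw [Finset.card_univ] at h2
    omega
  obtain ⟨b₀, hb₀⟩ := hAc
  obtain ⟨p⟩ := hconn.preconnected a₀ b₀
  obtain ⟨u, u', huu', hu, hu'⟩ := walk_cross p ha₀ hb₀
  obtain ⟨hne, f₁, hf₁, huf₁, hu'f₁⟩ := huu'
  have hcard₁ : f₁.card = n + 1 := hpure f₁ hf₁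
  have hsd : (f₁ \ {u, u'}).Nonempty := by
    apply Finset.card_pos.mp
    have h1 := Finset.le_card_sdiff ({u, u'} : Finset V) f₁
    have h2 : ({u, u'} : Finset V).card ≤ 2 := Finset.card_insert_le _ _ |>.trans (by simp)
    omega
  obtain ⟨y, hy⟩ := hsd
  rw [Finset.mem_sdiff] at hy
  have hyu : y ≠ u ∧ y ≠ u' := by
    constructor <;> { intro h; apply hy.2; simp [h] }
  have hw₁W : f₁.erase y ∈ W := by
    refine hWmem _ ?_ ⟨f₁, hf₁, Finset.erase_subset _ _⟩
    rw [Finset.card_erase_of_mem hy.1, hcard₁]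
    omega
  have hFD : D ≤ (faces.filter (fun f => (∃ v ∈ f, v ∈ A) ∧ (∃ v ∈ f, v ∉ A))).card := by
    rw [← hD _ hw₁W]
    apply Finset.card_le_card
    intro f hf
    rw [Finset.mem_filter] at hf ⊢
    refine ⟨hf.1, ⟨u, hf.2 (Finset.mem_erase.mpr ⟨hyu.1.symm, huf₁⟩), hu⟩,
      ⟨u', hf.2 (Finset.mem_erase.mpr ⟨hyu.2.symm, hu'f₁⟩), hu'⟩⟩
  -- real arithmetic
  set F : ℕ := (faces.filter (fun f => (∃ v ∈ f, v ∈ A) ∧ (∃ v ∈ f, v ∉ A))).card with hF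
  have hk'pos : (0 : ℝ) < (n : ℝ) + 1 - (k : ℝ) := by
    rw [← hkr]
    exact_mod_cast Nat.pos_of_ne_zero (by omega)
  have hdenom1 : (0 : ℝ) < (W.card : ℝ) * (n : ℝ) * (k : ℝ) * ((n : ℝ) + 1 - (k : ℝ)) := by
    have h1 : (0 : ℝ) < (W.card : ℝ) := by exact_mod_cast hm1
    have h2 : (0 : ℝ) < (n : ℝ) := by exact_mod_cast (by omega : 0 < n)
    have h3 : (0 : ℝ) < (k : ℝ) := by exact_mod_cast (by omega : 0 < k)
    positivity
  have hApos : (0 : ℝ) < (A.card : ℝ) := by exact_mod_cast hA0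
  have hVA : (0 : ℝ) < (Fintype.card V : ℝ) - (A.card : ℝ) := by
    rw [sub_pos]
    exact_mod_cast hAV
  have hdenom2 : (0 : ℝ) < (A.card : ℝ) * ((Fintype.card V : ℝ) - (A.card : ℝ)) :=
    mul_pos hApos hVA
  rw [div_le_div_iff₀ hdenom1 hdenom2]
  have hc1 : (δmin : ℝ) * (Fintype.card V : ℝ) ≤ (n : ℝ) * (W.card : ℝ) := by
    exact_mod_cast hδv
  have hc2 : (D : ℝ) ≤ (F : ℝ) := by exact_mod_cast hFD
  have hc3 : (n : ℝ) ≤ (k : ℝ) * ((n : ℝ) + 1 - (k : ℝ)) := by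
    rw [← hkr]
    exact_mod_cast hnkk'
  have hc5 : 4 * ((A.card : ℝ) * ((Fintype.card V : ℝ) - (A.card : ℝ)))
      ≤ (Fintype.card V : ℝ) * (Fintype.card V : ℝ) := by
    nlinarith [sq_nonneg ((Fintype.card V : ℝ) - 2 * (A.card : ℝ))]
  have hδnn : (0 : ℝ) ≤ (δmin : ℝ) := Nat.cast_nonneg _
  have hnnn : (0 : ℝ) ≤ (n : ℝ) := Nat.cast_nonneg _
  have hDnn : (0 : ℝ) ≤ (D : ℝ) := Nat.cast_nonneg _
  have hFnn : (0 : ℝ) ≤ (F : ℝ) := Nat.cast_nonneg _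
  have hmnn : (0 : ℝ) ≤ (W.card : ℝ) := Nat.cast_nonneg _
  have hvnn : (0 : ℝ) ≤ (Fintype.card V : ℝ) := Nat.cast_nonneg _
  have hknn : (0 : ℝ) ≤ (k : ℝ) := Nat.cast_nonneg _
  calc 2 * (δmin : ℝ) * ((n : ℝ) * (D : ℝ) - lam)
        * ((A.card : ℝ) * ((Fintype.card V : ℝ) - (A.card : ℝ)))
      ≤ 2 * (δmin : ℝ) * (2 * ((n : ℝ) * (D : ℝ)))
        * ((A.card : ℝ) * ((Fintype.card V : ℝ) - (A.card : ℝ))) := by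
        apply mul_le_mul_of_nonneg_right _ (le_of_lt hdenom2)
        apply mul_le_mul_of_nonneg_left hlam2 (by positivity)
    _ = ((δmin : ℝ) * (n : ℝ) * (D : ℝ))
        * (4 * ((A.card : ℝ) * ((Fintype.card V : ℝ) - (A.card : ℝ)))) := by ring
    _ ≤ ((δmin : ℝ) * (n : ℝ) * (D : ℝ))
        * ((Fintype.card V : ℝ) * (Fintype.card V : ℝ)) := by
        apply mul_le_mul_of_nonneg_left hc5 (by positivity)
    _ = ((δmin : ℝ) * (Fintype.card V : ℝ))
        * ((n : ℝ) * (D : ℝ) * (Fintype.card V : ℝ)) := by ring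
    _ ≤ ((n : ℝ) * (W.card : ℝ))
        * ((n : ℝ) * (D : ℝ) * (Fintype.card V : ℝ)) := by
        apply mul_le_mul_of_nonneg_right hc1 (by positivity)
    _ = ((n : ℝ) * (D : ℝ))
        * ((n : ℝ) * (W.card : ℝ) * (Fintype.card V : ℝ)) := by ring
    _ ≤ ((k : ℝ) * ((n : ℝ) + 1 - (k : ℝ)) * (F : ℝ))
        * ((n : ℝ) * (W.card : ℝ) * (Fintype.card V : ℝ)) := by
        have hkk'nn : (0 : ℝ) ≤ (k : ℝ) * ((n : ℝ) + 1 - (k : ℝ)) := by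
          have hkpos : (0 : ℝ) < (k : ℝ) := by exact_mod_cast (by omega : 0 < k)
          exact le_of_lt (mul_pos hkpos hk'pos)
        have hnd : (n : ℝ) * (D : ℝ)
            ≤ (k : ℝ) * ((n : ℝ) + 1 - (k : ℝ)) * (F : ℝ) :=
          mul_le_mul hc3 hc2 hDnn hkk'nn
        exact mul_le_mul_of_nonneg_right hnd (by positivity)
    _ = (Fintype.card V : ℝ) * (F : ℝ)
        * ((W.card : ℝ) * (n : ℝ) * (k : ℝ) * ((n : ℝ) + 1 - (k : ℝ))) := by ring
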